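/- Let n ≥ 0 and let G ∈ 𝒜ₙ contain a minimum restraining set of size r (a set S of r vertices that is (r, r+n)-restraining, with r+n minimal over all restraining sets with excess n). Then for every graph H, γ(G □ H) ≥ (γ(G) − r)·γ(H). -/
import Mathlib


open Finset

/-- `S` dominates `T`: every vertex of `T` is in the closed neighborhood of `S`. -/
def Dominates {V : Type*} (G : SimpleGraph V) (S T : Set V) : Prop :=
  ∀ t ∈ T, ∃ s ∈ S, s = t ∨ G.Adj s t

/-- The domination number of a finite graph. -/
noncomputable def domNum {V : Type*} [Fintype V] (G : SimpleGraph V) : ℕ :=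
  sInf {n | ∃ D : Finset V, D.card = n ∧ Dominates G ↑D Set.univ}

/-- A partition of the vertex set of `G` into `m` cliques. -/
structure CliquePartition {V : Type*} (G : SimpleGraph V) (m : ℕ) where
  parts : Fin m → Finset V
  disj : ∀ i j, i ≠ j → Disjoint (parts i) (parts j)
  cover : ∀ v, ∃ i, v ∈ parts i
  clique : ∀ i, G.IsClique ↑(parts i)

/-- The clique covering number: minimum number of cliques partitioning `V(G)`. -/
noncomputable def cliqueCoverNum {V : Type*} [Fintype V] (G : SimpleGraph V) : ℕ :=
  sInf {m | Nonempty (CliquePartition G m)}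

/-- The class `𝒟ₙ`: `θ(G) = γ(G) + n` and `G` is not a spanning subgraph
(with equal domination number) of a graph in `𝒟ₘ` for `m < n`. -/
def InD {V : Type*} [Fintype V] (n : ℕ) (G : SimpleGraph V) : Prop :=
  cliqueCoverNum G = domNum G + n ∧
    ∀ m : ℕ, m < n → ∀ H : SimpleGraph V, G ≤ H → domNum G = domNum H → ¬ InD m H
termination_by n

/-- The class `𝒜ₙ`: spanning subgraphs (with equal domination number) of graphs in `𝒟ₙ`. -/
def InA {V : Type*} [Fintype V] (n : ℕ) (G : SimpleGraph V) : Prop :=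
  ∃ H : SimpleGraph V, G ≤ H ∧ domNum G = domNum H ∧ InD n H


/-- `S` is restraining with avoided-and-dominated cliques indexed by `L` and met
cliques indexed by `T` (so `S` is `(|S|, |L|+|T|)`-restraining; its restraint is
`|L| + |T|` and its excess `|L| + |T| − |S|`). -/
def IsRestrainingOn {V : Type*} [DecidableEq V] {G : SimpleGraph V} {m : ℕ}
    (P : CliquePartition G m) (S : Finset V) (L T : Finset (Fin m)) : Prop :=
  Disjoint L T ∧
  (∀ i ∈ L, Disjoint S (P.parts i)) ∧
  Dominates G ↑S ↑(L.biUnion P.parts) ∧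
  (S ⊆ T.biUnion P.parts) ∧
  (∀ i ∈ T, (P.parts i ∩ S).Nonempty)

lemma domNum_le_card {V : Type*} [Fintype V] (G : SimpleGraph V) (D : Finset V)
    (h : Dominates G ↑D Set.univ) : domNum G ≤ D.card :=
  Nat.sInf_le ⟨D, rfl, h⟩

lemma exists_min_dom {V : Type*} [Fintype V] (G : SimpleGraph V) :
    ∃ D : Finset V, D.card = domNum G ∧ Dominates G ↑D Set.univ := by
  have hne : {k | ∃ D : Finset V, D.card = k ∧ Dominates G ↑D Set.univ}.Nonempty :=
    ⟨(univ : Finset V).card, univ, rfl,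
      fun t _ => ⟨t, Finset.mem_coe.mpr (mem_univ t), Or.inl rfl⟩⟩
  obtain ⟨D, hD, hdom⟩ := Nat.sInf_mem hne
  exact ⟨D, hD, hdom⟩

lemma excess_le {V : Type*} [Fintype V] [DecidableEq V] {G' : SimpleGraph V} {m : ℕ}
    (P : CliquePartition G' m) (S : Finset V) (L T : Finset (Fin m))
    (h : IsRestrainingOn P S L T) :
    domNum G' + (L.card + T.card) ≤ S.card + m := by
  classical
  obtain ⟨hdisj, hLdisj, hLdom, hsub, hT⟩ := h
  set E : Finset V := S ∪ (univ \ (L ∪ T)).biUnion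
      (fun i => if hne : (P.parts i).Nonempty then {hne.choose} else ∅) with hE
  have hdom : Dominates G' ↑E Set.univ := by
    intro v _
    obtain ⟨i, hvi⟩ := P.cover v
    by_cases hiL : i ∈ L
    · obtain ⟨s, hsS, hs⟩ := hLdom v (by
        simpa using (Finset.mem_biUnion.mpr ⟨i, hiL, hvi⟩))
      exact ⟨s, Finset.mem_coe.mpr (Finset.mem_union_left _ (Finset.mem_coe.mp hsS)), hs⟩
    · by_cases hiT : i ∈ T
      · obtain ⟨s, hs⟩ := hT i hiT
        rw [Finset.mem_inter] at hs
        refine ⟨s, Finset.mem_coe.mpr (Finset.mem_union_left _ hs.2), ?_⟩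
        rcases eq_or_ne s v with heq | hne
        · exact Or.inl heq
        · exact Or.inr ((P.clique i) (Finset.mem_coe.mpr hs.1) (Finset.mem_coe.mpr hvi) hne)
      · have hne : (P.parts i).Nonempty := ⟨v, hvi⟩
        have hmem : hne.choose ∈ E := by
          apply Finset.mem_union_right
          exact Finset.mem_biUnion.mpr ⟨i, by simp [hiL, hiT], by simp [hne]⟩
        refine ⟨hne.choose, Finset.mem_coe.mpr hmem, ?_⟩
        rcases eq_or_ne hne.choose v with heq | hneq
        · exact Or.inl heq
        · exact Or.inr ((P.clique i) (Finset.mem_coe.mpr hne.choose_spec)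
            (Finset.mem_coe.mpr hvi) hneq)
  have hLTcard : (L ∪ T).card = L.card + T.card := Finset.card_union_of_disjoint hdisj
  have hLTle : L.card + T.card ≤ m := by
    rw [← hLTcard]
    calc (L ∪ T).card ≤ (univ : Finset (Fin m)).card := Finset.card_le_univ _
    _ = m := by simp
  have hEcard : E.card ≤ S.card + (m - (L.card + T.card)) := by
    calc E.card ≤ S.card + ((univ \ (L ∪ T)).biUnion
        (fun i => if hne : (P.parts i).Nonempty then {hne.choose} else ∅)).card :=
          Finset.card_union_le _ _
    _ ≤ S.card + ∑ i ∈ univ \ (L ∪ T),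
        (if hne : (P.parts i).Nonempty then ({hne.choose} : Finset V) else ∅).card := by
          exact Nat.add_le_add_left (Finset.card_biUnion_le) _
    _ ≤ S.card + ∑ i ∈ univ \ (L ∪ T), 1 := by
          refine Nat.add_le_add_left (Finset.sum_le_sum fun i _ => ?_) _
          split <;> simp
    _ = S.card + (univ \ (L ∪ T)).card := by rw [Finset.sum_const, smul_eq_mul, mul_one]
    _ = S.card + (m - (L.card + T.card)) := by
          rw [Finset.card_sdiff_of_subset (Finset.subset_univ _), hLTcard]; simp
  have := domNum_le_card G' E hdom
  omega

/-- Corollary: if `G ∈ 𝒜ₙ` (via a supergraph `G' ∈ 𝒟ₙ` with clique partition into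
`γ + n` cliques) contains a minimum restraining set of size `r` (an `(r, r+n)`-restraining
set with minimum restraint over all restraining sets with excess `n`), then
`γ(G □ H) ≥ (γ(G) − r)·γ(H)` for every graph `H`. -/
theorem stmt16 {V : Type*} [Fintype V] [DecidableEq V] (n r : ℕ)
    (G : SimpleGraph V) (hG : InA n G)
    (G' : SimpleGraph V) (hsub : G ≤ G') (hγ : domNum G = domNum G') (hG' : InD n G')
    (P : CliquePartition G' (domNum G' + n))
    (S : Finset V) (L T : Finset (Fin (domNum G' + n)))
    (hS : IsRestrainingOn P S L T) (hScard : S.card = r)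
    (hrestraint : L.card + T.card = r + n)
    (hmin : ∀ (S' : Finset V) (L' T' : Finset (Fin (domNum G' + n))),
      IsRestrainingOn P S' L' T' → L'.card + T'.card = S'.card + n →
      r + n ≤ L'.card + T'.card) :
    ∀ (W : Type) [Fintype W] (H : SimpleGraph W),
      domNum (G.boxProd H) ≥ (domNum G - r) * domNum H := by
  intro W _ H
  classical
  obtain ⟨D, hDcard, hDdom⟩ := exists_min_dom (G.boxProd H)
  obtain ⟨hdisj, hLdisj, hLdom, hssub, hTmeet⟩ := hS
  set Dw : W → Finset V := fun w => (D.filter (fun p => p.2 = w)).image Prod.fst with hDw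
  have hDwmem : ∀ w g, g ∈ Dw w ↔ (g, w) ∈ D := by
    intro w g
    simp only [hDw, Finset.mem_image, Finset.mem_filter]
    constructor
    · rintro ⟨⟨a, b⟩, ⟨hab, hb⟩, ha⟩
      cases ha; cases hb; exact hab
    · intro h; exact ⟨(g, w), ⟨h, rfl⟩, rfl⟩
  set Tw : W → Finset (Fin (domNum G' + n)) := fun w =>
    univ.filter (fun i => (P.parts i ∩ Dw w).Nonempty) with hTw
  set Lw : W → Finset (Fin (domNum G' + n)) := fun w => univ.filter
      (fun i => ¬(P.parts i ∩ Dw w).Nonempty ∧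
        ∀ v ∈ P.parts i, ∃ s ∈ Dw w, s = v ∨ G'.Adj s v) with hLw
  have key : ∀ w, ((Lw w ∪ Tw w) \ (L ∪ T)).card ≤ (Dw w).card := by
    intro w
    have hrest : IsRestrainingOn P (S ∪ Dw w) ((L ∪ Lw w) \ (T ∪ Tw w)) (T ∪ Tw w) := by
      refine ⟨Finset.sdiff_disjoint, ?_, ?_, ?_, ?_⟩
      · intro i hi
        rw [Finset.mem_sdiff] at hi
        obtain ⟨hiLL, hiTT⟩ := hi
        rw [Finset.disjoint_union_left]
        constructor
        · rw [Finset.disjoint_left]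
          intro x hxS hxP
          obtain ⟨j, hjT, hxj⟩ := Finset.mem_biUnion.mp (hssub hxS)
          rcases eq_or_ne j i with rfl | hne
          · exact hiTT (Finset.mem_union_left _ hjT)
          · exact (Finset.disjoint_left.mp (P.disj j i hne) hxj) hxP
        · rw [Finset.disjoint_left]
          intro x hxD hxP
          apply hiTT
          apply Finset.mem_union_right
          rw [hTw]; simp only [Finset.mem_filter, Finset.mem_univ, true_and]
          exact ⟨x, Finset.mem_inter.mpr ⟨hxP, hxD⟩⟩
      · intro v hv
        simp only [Finset.coe_biUnion, Set.mem_iUnion, Finset.mem_coe] at hv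
        obtain ⟨i, hi, hvi⟩ := hv
        rw [Finset.mem_sdiff, Finset.mem_union] at hi
        obtain ⟨hiL | hiLw, _⟩ := hi
        · obtain ⟨s, hsS, hs⟩ := hLdom v (by
            simpa using (Finset.mem_biUnion.mpr ⟨i, hiL, hvi⟩))
          exact ⟨s, Finset.mem_coe.mpr
            (Finset.mem_union_left _ (Finset.mem_coe.mp hsS)), hs⟩
        · rw [hLw] at hiLw
          simp only [Finset.mem_filter, Finset.mem_univ, true_and] at hiLw
          obtain ⟨s, hsD, hs⟩ := hiLw.2 v hvi
          exact ⟨s, Finset.mem_coe.mpr (Finset.mem_union_right _ hsD), hs⟩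
      · intro x hx
        rcases Finset.mem_union.mp hx with hxS | hxD
        · obtain ⟨j, hjT, hxj⟩ := Finset.mem_biUnion.mp (hssub hxS)
          exact Finset.mem_biUnion.mpr ⟨j, Finset.mem_union_left _ hjT, hxj⟩
        · obtain ⟨j, hxj⟩ := P.cover x
          refine Finset.mem_biUnion.mpr ⟨j, Finset.mem_union_right _ ?_, hxj⟩
          rw [hTw]; simp only [Finset.mem_filter, Finset.mem_univ, true_and]
          exact ⟨x, Finset.mem_inter.mpr ⟨hxj, hxD⟩⟩
      · intro i hi
        rcases Finset.mem_union.mp hi with hiT | hiTw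
        · obtain ⟨s, hs⟩ := hTmeet i hiT
          rw [Finset.mem_inter] at hs
          exact ⟨s, Finset.mem_inter.mpr ⟨hs.1, Finset.mem_union_left _ hs.2⟩⟩
        · rw [hTw] at hiTw
          simp only [Finset.mem_filter, Finset.mem_univ, true_and] at hiTw
          obtain ⟨s, hs⟩ := hiTw
          rw [Finset.mem_inter] at hs
          exact ⟨s, Finset.mem_inter.mpr ⟨hs.1, Finset.mem_union_right _ hs.2⟩⟩
    have hex := excess_le P (S ∪ Dw w) _ _ hrest
    have hSDcard : (S ∪ Dw w).card ≤ r + (Dw w).card := by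
      calc (S ∪ Dw w).card ≤ S.card + (Dw w).card := Finset.card_union_le _ _
      _ = r + (Dw w).card := by rw [hScard]
    have hcardunion : ((L ∪ Lw w) \ (T ∪ Tw w)).card + (T ∪ Tw w).card
        = ((L ∪ T) ∪ (Lw w ∪ Tw w)).card := by
      rw [← Finset.card_union_of_disjoint
        (Finset.sdiff_disjoint (s := (T ∪ Tw w)) (t := L ∪ Lw w))]
      congr 1
      ext i
      simp only [Finset.mem_union, Finset.mem_sdiff]
      tauto
    have hXY : ((L ∪ T) ∪ (Lw w ∪ Tw w)).card
        = ((Lw w ∪ Tw w) \ (L ∪ T)).card + (L ∪ T).card := by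
      rw [Finset.card_sdiff_add_card, Finset.union_comm]
    have hLT : (L ∪ T).card = r + n := by
      rw [Finset.card_union_of_disjoint hdisj, hrestraint]
    omega
  have Bdom : ∀ i : Fin (domNum G' + n),
      Dominates H ↑(univ.filter (fun w => i ∈ Lw w ∪ Tw w)) Set.univ := by
    intro i w _
    by_cases hw : i ∈ Lw w ∪ Tw w
    · refine ⟨w, ?_, Or.inl rfl⟩
      rw [Finset.mem_coe, Finset.mem_filter]
      exact ⟨Finset.mem_univ _, hw⟩
    · rw [Finset.mem_union] at hw
      push_neg at hw
      obtain ⟨hw1, hw2⟩ := hw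
      rw [hTw] at hw2
      simp only [Finset.mem_filter, Finset.mem_univ, true_and] at hw2
      rw [hLw] at hw1
      simp only [Finset.mem_filter, Finset.mem_univ, true_and, not_and] at hw1
      have hnot := hw1 hw2
      push_neg at hnot
      obtain ⟨v, hvP, hv⟩ := hnot
      obtain ⟨sp, hsD, hcase⟩ := hDdom (v, w) (Set.mem_univ _)
      obtain ⟨s, w'⟩ := sp
      rw [Finset.mem_coe] at hsD
      rcases hcase with heq | hadj
      · have h1 : s = v := congrArg Prod.fst heq
        have h2 : w' = w := congrArg Prod.snd heq
        rw [h1, h2] at hsD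
        exact absurd rfl (hv v ((hDwmem w v).mpr hsD)).1
      · rw [SimpleGraph.boxProd_adj] at hadj
        rcases hadj with ⟨hGadj, hw'⟩ | ⟨hHadj, hsv⟩
        · dsimp only at hGadj hw'
          rw [hw'] at hsD
          exact absurd (hsub hGadj) (hv s ((hDwmem w s).mpr hsD)).2
        · dsimp only at hsv hHadj
          subst hsv
          refine ⟨w', ?_, Or.inr hHadj⟩
          rw [Finset.mem_coe, Finset.mem_filter]
          refine ⟨Finset.mem_univ _, Finset.mem_union_right _ ?_⟩
          rw [hTw]
          simp only [Finset.mem_filter, Finset.mem_univ, true_and]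
          exact ⟨s, Finset.mem_inter.mpr ⟨hvP, (hDwmem w' s).mpr hsD⟩⟩
  have hfibers : ∑ w : W, (Dw w).card = D.card := by
    have h1 : D.card = ∑ w : W, (D.filter (fun p => p.2 = w)).card :=
      Finset.card_eq_sum_card_fiberwise (fun p _ => Finset.mem_univ p.2)
    rw [h1]
    refine Finset.sum_congr rfl fun w _ => ?_
    rw [hDw]
    apply Finset.card_image_of_injOn
    intro p hp q hq hpq
    simp only [Finset.mem_coe, Finset.mem_filter] at hp hq
    exact Prod.ext hpq (hp.2.trans hq.2.symm)
  set I : Finset (Fin (domNum G' + n)) := univ \ (L ∪ T) with hI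
  have hIcard : I.card = domNum G - r := by
    have huniv : (univ : Finset (Fin (domNum G' + n))).card = domNum G' + n := by simp
    rw [hI, Finset.card_sdiff_of_subset (Finset.subset_univ _),
      Finset.card_union_of_disjoint hdisj, hrestraint, huniv]
    omega
  calc domNum (G.boxProd H) = D.card := hDcard.symm
    _ = ∑ w : W, (Dw w).card := hfibers.symm
    _ ≥ ∑ w : W, ((Lw w ∪ Tw w) \ (L ∪ T)).card := Finset.sum_le_sum (fun w _ => key w)
    _ = ∑ w : W, (I.filter (fun i => i ∈ Lw w ∪ Tw w)).card := by
        refine Finset.sum_congr rfl fun w _ => ?_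
        congr 1
        ext i
        simp only [Finset.mem_sdiff, Finset.mem_filter, hI, Finset.mem_univ, true_and]
        tauto
    _ = ∑ w : W, ∑ i ∈ I, if i ∈ Lw w ∪ Tw w then 1 else 0 := by
        refine Finset.sum_congr rfl fun w _ => ?_
        rw [Finset.card_filter]
    _ = ∑ i ∈ I, ∑ w : W, if i ∈ Lw w ∪ Tw w then 1 else 0 := Finset.sum_comm
    _ = ∑ i ∈ I, (univ.filter (fun w => i ∈ Lw w ∪ Tw w)).card := by
        refine Finset.sum_congr rfl fun i _ => ?_
        rw [Finset.card_filter]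
    _ ≥ ∑ i ∈ I, domNum H :=
        Finset.sum_le_sum (fun i _ => domNum_le_card H _ (Bdom i))
    _ = I.card * domNum H := by rw [Finset.sum_const, smul_eq_mul]
    _ = (domNum G - r) * domNum H := by rw [hIcard]
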